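/- Suppose (≿, c) on the simplex Δ(Z) satisfies the Independence axiom for both ≿ and c (specifically, c(αA + (1−α){p}) = α·c(A) + (1−α){p} for all finite menus A, lotteries p, and α ∈ (0,1), and p ≿ q implies αp + (1−α)r ≿ αq + (1−α)r). Define B(p) = {q ∈ Δ(Z) : p ≿ q and {q} = c({p, q})}. Then B(p) is a convex cone with vertex p: if q ∈ B(p) and α ∈ (0,1), then αp + (1−α)q ∈ B(p) and conversely; and if q, r ∈ B(p) then αq + (1−α)r ∈ B(p), where the latter also uses IUA. -/

import Mathlib

open Finset
open scoped Classical

/-- `B(p)`: lotteries weakly worse than `p` that nevertheless defeat `p`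
in pairwise choice. -/
def Bset {Z : Type*} (pref : (Z → ℝ) → (Z → ℝ) → Prop)
    (c : Finset (Z → ℝ) → Finset (Z → ℝ)) (p q : Z → ℝ) : Prop :=
  pref p q ∧ c {p, q} = {q}

/-- `W(p)`: lotteries weakly better than `p` that nevertheless lose to `p`
in pairwise choice. -/
def Wset {Z : Type*} (pref : (Z → ℝ) → (Z → ℝ) → Prop)
    (c : Finset (Z → ℝ) → Finset (Z → ℝ)) (p q : Z → ℝ) : Prop :=
  pref q p ∧ q ∉ c {p, q}

/-- Independence axiom for the true preference. -/
def PrefIndep {Z : Type*} (pref : (Z → ℝ) → (Z → ℝ) → Prop) : Prop :=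
  ∀ (p q r : Z → ℝ), ∀ a : ℝ, a ∈ Set.Ioo (0:ℝ) 1 →
    pref p q → pref (a • p + (1 - a) • r) (a • q + (1 - a) • r)

/-- Independence axiom for choice. -/
def ChoiceIndep {Z : Type*} (c : Finset (Z → ℝ) → Finset (Z → ℝ)) : Prop :=
  ∀ (A : Finset (Z → ℝ)) (p : Z → ℝ), ∀ a : ℝ, a ∈ Set.Ioo (0:ℝ) 1 →
    c (A.image fun q => a • q + (1 - a) • p) =
      (c A).image fun q => a • q + (1 - a) • p

/-- Irrelevance of Unjustifiable Alternatives on the lottery domain. -/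
def IUAL {Z : Type*} (pref : (Z → ℝ) → (Z → ℝ) → Prop)
    (c : Finset (Z → ℝ) → Finset (Z → ℝ)) : Prop :=
  ∀ (A : Finset (Z → ℝ)) (q : Z → ℝ), q ∈ A → (∀ b ∈ c A, pref q b) → q ∉ c A →
    ∀ B : Finset (Z → ℝ), A ⊆ B → c (B.erase q) = c B

/-! ### Auxiliary lemmas -/

/-- From `pref x y`, independence lets us shift the comparison anywhere,
at any scale `b ∈ (0,1)`. -/
lemma pref_small {Z : Type*} {pref : (Z → ℝ) → (Z → ℝ) → Prop}
    (hPI : PrefIndep pref) {x y : Z → ℝ} (h : pref x y)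
    {b : ℝ} (hb : b ∈ Set.Ioo (0:ℝ) 1) (w : Z → ℝ) : pref w (w - b • (x - y)) := by
  obtain ⟨hb0, hb1⟩ := hb
  have hb1' : (1:ℝ) - b ≠ 0 := by linarith
  have h2 := hPI x y ((1 - b)⁻¹ • (w - b • x)) b ⟨hb0, hb1⟩ h
  have e1 : b • x + (1 - b) • ((1 - b)⁻¹ • (w - b • x)) = w := by
    funext z
    simp only [Pi.add_apply, Pi.smul_apply, Pi.sub_apply, smul_eq_mul]
    field_simp
    ring
  have e2 : b • y + (1 - b) • ((1 - b)⁻¹ • (w - b • x)) = w - b • (x - y) := by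
    funext z
    simp only [Pi.add_apply, Pi.smul_apply, Pi.sub_apply, smul_eq_mul]
    field_simp
    ring
  rwa [e1, e2] at h2

/-- Iterating a translation-step via transitivity. -/
lemma pref_iter {Z : Type*} {pref : (Z → ℝ) → (Z → ℝ) → Prop}
    (htrans : Transitive pref) {d : Z → ℝ} (h : ∀ w, pref w (w - d)) :
    ∀ (n : ℕ) (w : Z → ℝ), pref w (w - ((n:ℝ) + 1) • d) := by
  intro n
  induction n with
  | zero => intro w; simpa using h w
  | succ k ih =>
    intro w
    have h1 := h w
    have h2 := ih (w - d)
    have e : (w - d) - ((k:ℝ) + 1) • d = w - (((k+1:ℕ):ℝ) + 1) • d := by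
      funext z
      simp only [Pi.sub_apply, Pi.smul_apply, smul_eq_mul]
      push_cast
      ring
    rw [e] at h2
    exact htrans h1 h2

/-- Key "unmixing" lemma: under independence and transitivity,
`p ≿ a p + (1-a) q` implies `p ≿ q`. -/
lemma pref_unmix {Z : Type*} {pref : (Z → ℝ) → (Z → ℝ) → Prop}
    (hPI : PrefIndep pref) (htrans : Transitive pref) {p q : Z → ℝ} {a : ℝ}
    (ha : a ∈ Set.Ioo (0:ℝ) 1) (h : pref p (a • p + (1 - a) • q)) : pref p q := by
  obtain ⟨ha0, ha1⟩ := ha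
  have h1a : (0:ℝ) < 1 - a := by linarith
  obtain ⟨n, hn⟩ := exists_nat_gt ((1 - a)⁻¹)
  have hinvpos : 0 < (1 - a)⁻¹ := inv_pos.mpr h1a
  have hn0 : 0 < n := by
    by_contra hc
    push_neg at hc
    interval_cases n
    simp at hn
    linarith
  obtain ⟨k, rfl⟩ : ∃ k, n = k + 1 := ⟨n - 1, by omega⟩
  set K : ℝ := (k:ℝ) + 1 with hK
  have hKpos : 0 < K := by positivity
  have hKn : (1 - a)⁻¹ < K := by
    rw [hK]; push_cast at hn ⊢; linarith
  have ht : 1 < K * (1 - a) := by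
    have := mul_lt_mul_of_pos_right hKn h1a
    rwa [inv_mul_cancel₀ (ne_of_gt h1a)] at this
  have htpos : 0 < K * (1 - a) := mul_pos hKpos h1a
  set b : ℝ := (K * (1 - a))⁻¹ with hb
  have hbpos : 0 < b := inv_pos.mpr htpos
  have hbinv : b * (K * (1 - a)) = 1 := inv_mul_cancel₀ (ne_of_gt htpos)
  have hb1 : b < 1 := by nlinarith
  have step := fun w => pref_small hPI h ⟨hbpos, hb1⟩ w
  have h3 := pref_iter htrans step k p
  have e : p - ((k:ℝ) + 1) • (b • (p - (a • p + (1 - a) • q))) = q := by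
    funext z
    simp only [Pi.sub_apply, Pi.smul_apply, Pi.add_apply, smul_eq_mul]
    have hKne : K ≠ 0 := ne_of_gt hKpos
    have h1ane : (1:ℝ) - a ≠ 0 := ne_of_gt h1a
    rw [hb, hK]
    field_simp
    ring
  rwa [e] at h3

lemma singl_of_nonempty_subset {α : Type*} {s : Finset α} {x : α}
    (hne : s.Nonempty) (hss : s ⊆ {x}) : s = {x} := by
  rcases Finset.subset_singleton_iff.mp hss with h | h
  · exact absurd h hne.ne_empty
  · exact h

/-- Mixing a winning pair. -/
lemma choice_pair {Z : Type*} {c : Finset (Z → ℝ) → Finset (Z → ℝ)}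
    (hCI : ChoiceIndep c) {p q : Z → ℝ} (h : c {p, q} = {q})
    {b : ℝ} (hb : b ∈ Set.Ioo (0:ℝ) 1) (s : Z → ℝ) :
    c {b • p + (1 - b) • s, b • q + (1 - b) • s} = {b • q + (1 - b) • s} := by
  have h2 := hCI {p, q} s b hb
  simp only [Finset.image_insert, Finset.image_singleton, h] at h2
  exact h2

section AuxMain

variable {Z : Type*} {pref : (Z → ℝ) → (Z → ℝ) → Prop}
  {c : Finset (Z → ℝ) → Finset (Z → ℝ)}

lemma Bset_fwd (hPI : PrefIndep pref) (hCI : ChoiceIndep c)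
    {p q : Z → ℝ} {a : ℝ} (ha : a ∈ Set.Ioo (0:ℝ) 1)
    (hB : Bset pref c p q) : Bset pref c p (a • p + (1 - a) • q) := by
  obtain ⟨ha0, ha1⟩ := ha
  obtain ⟨hpq, hcq⟩ := hB
  have ha' : (1 - a) ∈ Set.Ioo (0:ℝ) 1 := ⟨by linarith, by linarith⟩
  have ep : (1 - a) • p + (1 - (1 - a)) • p = p := by
    funext z; simp only [Pi.add_apply, Pi.smul_apply, smul_eq_mul]; ring
  have em : (1 - a) • q + (1 - (1 - a)) • p = a • p + (1 - a) • q := by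
    funext z; simp only [Pi.add_apply, Pi.smul_apply, smul_eq_mul]; ring
  constructor
  · have h := hPI p q p (1 - a) ha' hpq
    rwa [ep, em] at h
  · have h := choice_pair hCI hcq ha' p
    rwa [ep, em] at h

lemma Bset_bwd (hPI : PrefIndep pref) (hCI : ChoiceIndep c)
    (htrans : Transitive pref)
    (hsub : ∀ A, c A ⊆ A) (hnem : ∀ A : Finset (Z → ℝ), A.Nonempty → (c A).Nonempty)
    {p q : Z → ℝ} {a : ℝ} (ha : a ∈ Set.Ioo (0:ℝ) 1)
    (hB : Bset pref c p (a • p + (1 - a) • q)) : Bset pref c p q := by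
  obtain ⟨ha0, ha1⟩ := ha
  obtain ⟨hpm, hcm⟩ := hB
  have ha' : (1 - a) ∈ Set.Ioo (0:ℝ) 1 := ⟨by linarith, by linarith⟩
  have h1a : (1:ℝ) - a ≠ 0 := by linarith
  refine ⟨pref_unmix hPI htrans ⟨ha0, ha1⟩ hpm, ?_⟩
  by_cases hpq : p = q
  · have hset : ({p, q} : Finset (Z → ℝ)) = {q} := by rw [hpq]; simp
    rw [hset]
    exact singl_of_nonempty_subset (hnem _ (Finset.singleton_nonempty q)) (hsub _)
  · have hpm_ne : p ≠ a • p + (1 - a) • q := by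
      intro h
      apply hpq
      funext z
      have hz := congrFun h z
      simp only [Pi.add_apply, Pi.smul_apply, smul_eq_mul] at hz
      have : (1 - a) * p z = (1 - a) * q z := by linarith
      exact mul_left_cancel₀ h1a this
    have ep : (1 - a) • p + (1 - (1 - a)) • p = p := by
      funext z; simp only [Pi.add_apply, Pi.smul_apply, smul_eq_mul]; ring
    have em : (1 - a) • q + (1 - (1 - a)) • p = a • p + (1 - a) • q := by
      funext z; simp only [Pi.add_apply, Pi.smul_apply, smul_eq_mul]; ring
    have h2 := hCI {p, q} p (1 - a) ha'
    rw [Finset.image_insert, Finset.image_singleton, ep, em, hcm] at h2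
    have hpnotin : p ∉ c ({p, q} : Finset (Z → ℝ)) := by
      intro hp
      have hmem : (1 - a) • p + (1 - (1 - a)) • p ∈
          (c ({p, q} : Finset (Z → ℝ))).image
            (fun x => (1 - a) • x + (1 - (1 - a)) • p) :=
        Finset.mem_image_of_mem _ hp
      rw [← h2, ep] at hmem
      exact hpm_ne (Finset.mem_singleton.mp hmem)
    apply singl_of_nonempty_subset (hnem _ (Finset.insert_nonempty _ _))
    intro x hx
    rcases Finset.mem_insert.mp (hsub _ hx) with h | h
    · exact absurd (h ▸ hx) hpnotin
    · exact h

lemma Bset_mix (htrans : Transitive pref)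
    (hsub : ∀ A, c A ⊆ A) (hnem : ∀ A : Finset (Z → ℝ), A.Nonempty → (c A).Nonempty)
    (hPI : PrefIndep pref) (hCI : ChoiceIndep c) (hIUA : IUAL pref c)
    {p q r : Z → ℝ} {a : ℝ} (ha : a ∈ Set.Ioo (0:ℝ) 1)
    (hBq : Bset pref c p q) (hBr : Bset pref c p r) :
    Bset pref c p (a • q + (1 - a) • r) := by
  obtain ⟨ha0, ha1⟩ := ha
  have h1a : (1:ℝ) - a ≠ 0 := by linarith
  have hane : a ≠ 0 := by linarith
  have ha' : (1 - a) ∈ Set.Ioo (0:ℝ) 1 := ⟨by linarith, by linarith⟩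
  obtain ⟨hpq, hcq⟩ := hBq
  obtain ⟨hpr, hcr⟩ := hBr
  have eqp : (1 - a) • p + (1 - (1 - a)) • p = p := by
    funext z; simp only [Pi.add_apply, Pi.smul_apply, smul_eq_mul]; ring
  have eqm1 : (1 - a) • r + (1 - (1 - a)) • p = a • p + (1 - a) • r := by
    funext z; simp only [Pi.add_apply, Pi.smul_apply, smul_eq_mul]; ring
  have hpm1 : pref p (a • p + (1 - a) • r) := by
    have h := hPI p r p (1 - a) ha' hpr
    rwa [eqp, eqm1] at h
  have hm1m : pref (a • p + (1 - a) • r) (a • q + (1 - a) • r) :=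
    hPI p q r a ⟨ha0, ha1⟩ hpq
  have hpm : pref p (a • q + (1 - a) • r) := htrans hpm1 hm1m
  by_cases hq : p = q
  · subst hq
    exact Bset_fwd hPI hCI ⟨ha0, ha1⟩ ⟨hpr, hcr⟩
  by_cases hr : p = r
  · subst hr
    have h := Bset_fwd hPI hCI ha' ⟨hpq, hcq⟩
    have e : (1 - a) • p + (1 - (1 - a)) • q = a • q + (1 - a) • p := by
      funext z; simp only [Pi.add_apply, Pi.smul_apply, smul_eq_mul]; ring
    rwa [e] at h
  by_cases hm : p = a • q + (1 - a) • r
  · refine ⟨hpm, ?_⟩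
    have hset : ({p, a • q + (1 - a) • r} : Finset (Z → ℝ))
        = {a • q + (1 - a) • r} := by
      rw [hm]
      exact Finset.insert_eq_self.mpr (Finset.mem_singleton_self _)
    rw [hset]
    exact singl_of_nonempty_subset (hnem _ (Finset.singleton_nonempty _)) (hsub _)
  · have hne_pm1 : p ≠ a • p + (1 - a) • r := by
      intro h
      apply hr
      funext z
      have hz := congrFun h z
      simp only [Pi.add_apply, Pi.smul_apply, smul_eq_mul] at hz
      have : (1 - a) * p z = (1 - a) * r z := by linarith
      exact mul_left_cancel₀ h1a this
    have hne_m1m : a • p + (1 - a) • r ≠ a • q + (1 - a) • r := by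
      intro h
      apply hq
      funext z
      have hz := congrFun h z
      simp only [Pi.add_apply, Pi.smul_apply, smul_eq_mul] at hz
      have : a * p z = a * q z := by linarith
      exact mul_left_cancel₀ hane this
    have hcpm1 : c {p, a • p + (1 - a) • r} = {a • p + (1 - a) • r} := by
      have h := choice_pair hCI hcr ha' p
      rwa [eqp, eqm1] at h
    have hcm1m : c {a • p + (1 - a) • r, a • q + (1 - a) • r}
        = {a • q + (1 - a) • r} := choice_pair hCI hcq ⟨ha0, ha1⟩ r
    set m1 : Z → ℝ := a • p + (1 - a) • r with hm1def
    set m : Z → ℝ := a • q + (1 - a) • r with hmdef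
    have hstep1 := hIUA {p, m1} p (Finset.mem_insert_self _ _)
      (by rw [hcpm1]; intro b hb; rw [Finset.mem_singleton] at hb; subst hb; exact hpm1)
      (by rw [hcpm1]; simp only [Finset.mem_singleton]; exact hne_pm1)
      {p, m1, m}
      (by intro x hx
          simp only [Finset.mem_insert, Finset.mem_singleton] at hx ⊢
          tauto)
    have herase1 : ({p, m1, m} : Finset (Z → ℝ)).erase p = {m1, m} := by
      ext x
      simp only [Finset.mem_erase, Finset.mem_insert, Finset.mem_singleton]
      constructor
      · rintro ⟨hxp, rfl | rfl | rfl⟩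
        · exact absurd rfl hxp
        · exact Or.inl rfl
        · exact Or.inr rfl
      · rintro (rfl | rfl)
        · exact ⟨Ne.symm hne_pm1, Or.inr (Or.inl rfl)⟩
        · exact ⟨Ne.symm hm, Or.inr (Or.inr rfl)⟩
    have hcB : c ({p, m1, m} : Finset (Z → ℝ)) = {m} := by
      rw [← hstep1, herase1, hcm1m]
    have hstep2 := hIUA {p, m1, m} m1
      (by simp only [Finset.mem_insert, Finset.mem_singleton]; tauto)
      (by rw [hcB]; intro b hb; rw [Finset.mem_singleton] at hb; subst hb; exact hm1m)
      (by rw [hcB]; simp only [Finset.mem_singleton]; exact hne_m1m)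
      {p, m1, m} (Finset.Subset.refl _)
    have herase2 : ({p, m1, m} : Finset (Z → ℝ)).erase m1 = {p, m} := by
      ext x
      simp only [Finset.mem_erase, Finset.mem_insert, Finset.mem_singleton]
      constructor
      · rintro ⟨hxm1, rfl | rfl | rfl⟩
        · exact Or.inl rfl
        · exact absurd rfl hxm1
        · exact Or.inr rfl
      · rintro (rfl | rfl)
        · exact ⟨hne_pm1, Or.inl rfl⟩
        · exact ⟨Ne.symm hne_m1m, Or.inr (Or.inr rfl)⟩
    refine ⟨hpm, ?_⟩
    rw [← herase2, hstep2, hcB]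

end AuxMain

/-- under Independence (and IUA), `B(p)` is a convex cone with
vertex `p`. -/
theorem Bset_convex_cone {Z : Type*} [Fintype Z]
    (pref : (Z → ℝ) → (Z → ℝ) → Prop) (c : Finset (Z → ℝ) → Finset (Z → ℝ))
    (hcomp : ∀ p q : Z → ℝ, pref p q ∨ pref q p) (htrans : Transitive pref)
    (hsub : ∀ A, c A ⊆ A) (hnem : ∀ A : Finset (Z → ℝ), A.Nonempty → (c A).Nonempty)
    (hPI : PrefIndep pref) (hCI : ChoiceIndep c) (hIUA : IUAL pref c)
    (p : Z → ℝ) (hp : p ∈ stdSimplex ℝ Z) :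
    (∀ q ∈ stdSimplex ℝ Z, ∀ a ∈ Set.Ioo (0:ℝ) 1,
        (Bset pref c p q ↔ Bset pref c p (a • p + (1 - a) • q))) ∧
    (∀ q ∈ stdSimplex ℝ Z, ∀ r ∈ stdSimplex ℝ Z, ∀ a ∈ Set.Ioo (0:ℝ) 1,
        Bset pref c p q → Bset pref c p r →
          Bset pref c p (a • q + (1 - a) • r)) := by
  constructor
  · intro q _ a ha
    exact ⟨Bset_fwd hPI hCI ha, Bset_bwd hPI hCI htrans hsub hnem ha⟩
  · intro q _ r _ a ha hBq hBr
    exact Bset_mix htrans hsub hnem hPI hCI hIUA ha hBq hBr
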